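/- arXiv:0711.2980 — 4 statements merged into one kernel-verified Lean document; each statement's English description precedes it below -/
import Mathlib

section
/- For every α > 0 there exists β > 0 such that for all h with 0 < h ≤ 1 and all real k, |sin(hk)/h| ≤ α |(cos(hk) − 1)/h²| + β. -/
theorem stmt_5 (α : ℝ) (hα : 0 < α) :
    ∃ β : ℝ, 0 < β ∧ ∀ h : ℝ, 0 < h → h ≤ 1 → ∀ k : ℝ,
      |Real.sin (h * k) / h| ≤ α * |(Real.cos (h * k) - 1) / h ^ 2| + β := by
  refine ⟨1 / (2 * α), by positivity, fun h hh hh1 k => ?_⟩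
  have hc : Real.cos (h * k) ≤ 1 := Real.cos_le_one _
  have hs2 : Real.sin (h * k) ^ 2 + Real.cos (h * k) ^ 2 = 1 := Real.sin_sq_add_cos_sq _
  rw [abs_div, abs_of_pos hh, abs_div, abs_of_pos (by positivity : (0:ℝ) < h ^ 2),
    abs_of_nonpos (by linarith : Real.cos (h * k) - 1 ≤ 0)]
  rw [div_le_iff₀ hh] -- want |sin| ≤ (α * (-(c-1))/h² + 1/(2α)) * h
  have habs : |Real.sin (h * k)| ^ 2 = Real.sin (h * k) ^ 2 := sq_abs _
  have hnn : 0 ≤ |Real.sin (h * k)| := abs_nonneg _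
  have key : α * |Real.sin (h * k)| * h ≤ α ^ 2 * (1 - Real.cos (h * k)) + h ^ 2 / 2 := by
    nlinarith [sq_nonneg (α * |Real.sin (h * k)| - h), sq_nonneg (Real.cos (h * k) - 1)]
  have h2 : (α * (-(Real.cos (h * k) - 1) / h ^ 2) + 1 / (2 * α)) * h
      = (α ^ 2 * (1 - Real.cos (h * k)) + h ^ 2 / 2) / (α * h) := by
    field_simp; ring
  rw [h2, le_div_iff₀ (by positivity)]
  nlinarith [key]
end

section
/- Let Δ_h and ∇_h be the discrete Laplacian and symmetric difference operators on periodic functions on the lattice X_m = h·ℤ ∩ [−L, L] (with periodic identification), i.e. (∇_h f)(x) = (f(x+h) − f(x−h))/(2h) and (Δ_h f)(x) = (f(x+h) + f(x−h) − 2f(x))/h². Then for every α > 0 there exists β > 0, independent of h ∈ (0, 1], such that ‖∇_h f‖₂ ≤ α ‖Δ_h f‖₂ + β ‖f‖₂ for all f. -/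
lemma shiftsum {n : ℕ} [NeZero n] (F : ZMod n → ℝ) (c : ZMod n) :
    ∑ x : ZMod n, F (x + c) = ∑ x : ZMod n, F x :=
  Fintype.sum_equiv (Equiv.addRight c) _ _ (fun _ => rfl)

theorem stmt_6 (α : ℝ) (hα : 0 < α) :
    ∃ β : ℝ, 0 < β ∧ ∀ h : ℝ, 0 < h → h ≤ 1 →
      ∀ (n : ℕ) [NeZero n], ∀ f : ZMod n → ℝ,
        Real.sqrt (∑ x : ZMod n, ((f (x + 1) - f (x - 1)) / (2 * h)) ^ 2) ≤
          α * Real.sqrt (∑ x : ZMod n, ((f (x + 1) + f (x - 1) - 2 * f x) / h ^ 2) ^ 2) +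
            β * Real.sqrt (∑ x : ZMod n, f x ^ 2) := by
  refine ⟨1 / (2 * α), by positivity, ?_⟩
  intro h hh hh1 n _ f
  set G : ZMod n → ℝ := fun x => f (x + 1) - f (x - 1) with hG
  set D : ZMod n → ℝ := fun x => f (x + 1) + f (x - 1) - 2 * f x with hD
  set a := Real.sqrt (∑ x : ZMod n, G x ^ 2) with ha
  set b := Real.sqrt (∑ x : ZMod n, D x ^ 2) with hb
  set c := Real.sqrt (∑ x : ZMod n, f x ^ 2) with hc
  have hSG : (0:ℝ) ≤ ∑ x : ZMod n, G x ^ 2 := Finset.sum_nonneg fun _ _ => sq_nonneg _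
  have hSD : (0:ℝ) ≤ ∑ x : ZMod n, D x ^ 2 := Finset.sum_nonneg fun _ _ => sq_nonneg _
  have hSf : (0:ℝ) ≤ ∑ x : ZMod n, f x ^ 2 := Finset.sum_nonneg fun _ _ => sq_nonneg _
  have ha0 : 0 ≤ a := Real.sqrt_nonneg _
  have hb0 : 0 ≤ b := Real.sqrt_nonneg _
  have hc0 : 0 ≤ c := Real.sqrt_nonneg _
  have ha2 : a ^ 2 = ∑ x : ZMod n, G x ^ 2 := Real.sq_sqrt hSG
  have hb2 : b ^ 2 = ∑ x : ZMod n, D x ^ 2 := Real.sq_sqrt hSD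
  have hc2 : c ^ 2 = ∑ x : ZMod n, f x ^ 2 := Real.sq_sqrt hSf
  -- Cauchy-Schwarz helper
  have CS : ∀ F : ZMod n → ℝ, (∑ x : ZMod n, F x ^ 2 = ∑ x : ZMod n, f x ^ 2) →
      -(c * b) ≤ ∑ x : ZMod n, F x * D x := by
    intro F hF
    have h1 : (∑ x : ZMod n, F x * D x) ^ 2 ≤
        (∑ x : ZMod n, F x ^ 2) * ∑ x : ZMod n, D x ^ 2 :=
      Finset.sum_mul_sq_le_sq_mul_sq Finset.univ F D
    rw [hF, ← hc2, ← hb2] at h1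
    nlinarith [sq_nonneg ((∑ x : ZMod n, F x * D x) + c * b), mul_nonneg hc0 hb0]
  -- summation by parts identity
  have key : ∑ x : ZMod n, G x ^ 2 ≤ 4 * (c * b) := by
    have e1 : ∀ x : ZMod n, G x ^ 2
        = 2 * f (x + 1) ^ 2 + 2 * f (x - 1) ^ 2 - 4 * f x ^ 2
          - (f (x - 1) * D x + f (x + 1) * D x + 2 * (f x * D x)) := by
      intro x; simp only [hG, hD]; ring
    have s1 : ∑ x : ZMod n, f (x + 1) ^ 2 = ∑ x : ZMod n, f x ^ 2 :=
      shiftsum (fun y => f y ^ 2) 1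
    have s2 : ∑ x : ZMod n, f (x - 1) ^ 2 = ∑ x : ZMod n, f x ^ 2 := by
      simpa [sub_eq_add_neg] using shiftsum (fun y => f y ^ 2) (-1)
    have t1 : ∑ x : ZMod n, f (x + 1) ^ 2 - ∑ x : ZMod n, f x ^ 2 = 0 := by
      rw [s1]; ring
    have hA : -(c * b) ≤ ∑ x : ZMod n, f (x - 1) * D x := by
      apply CS; simpa [sub_eq_add_neg] using shiftsum (fun y => f y ^ 2) (-1)
    have hB : -(c * b) ≤ ∑ x : ZMod n, f (x + 1) * D x := by
      apply CS; exact shiftsum (fun y => f y ^ 2) 1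
    have hC : -(c * b) ≤ ∑ x : ZMod n, f x * D x := CS f rfl
    have etot : ∑ x : ZMod n, G x ^ 2
        = - ((∑ x : ZMod n, f (x - 1) * D x) + (∑ x : ZMod n, f (x + 1) * D x)
            + 2 * ∑ x : ZMod n, f x * D x) := by
      have := Finset.sum_congr rfl (fun x (_ : x ∈ Finset.univ) => e1 x)
      rw [this]
      simp only [Finset.sum_sub_distrib, Finset.sum_add_distrib, ← Finset.mul_sum]
      rw [s1, s2]; ring
    rw [etot]; linarith
  -- rewrite the goal, pulling out the constants
  have h2h : (0:ℝ) < 2 * h := by linarith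
  have hh2 : (0:ℝ) < h ^ 2 := by positivity
  have lhs_eq : Real.sqrt (∑ x : ZMod n, ((f (x + 1) - f (x - 1)) / (2 * h)) ^ 2)
      = a / (2 * h) := by
    rw [ha]
    simp only [div_pow, ← Finset.sum_div]
    rw [Real.sqrt_div hSG, Real.sqrt_sq h2h.le]
  have mid_eq : Real.sqrt (∑ x : ZMod n, ((f (x + 1) + f (x - 1) - 2 * f x) / h ^ 2) ^ 2)
      = b / h ^ 2 := by
    rw [hb]
    simp only [div_pow, ← Finset.sum_div]
    rw [Real.sqrt_div hSD, Real.sqrt_sq hh2.le]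
  rw [lhs_eq, mid_eq]
  -- final AM-GM step
  set u := a / (2 * h) with hu
  set v := b / h ^ 2 with hv
  have hu0 : 0 ≤ u := by positivity
  have hv0 : 0 ≤ v := by positivity
  have hucv : u ^ 2 ≤ c * v := by
    rw [hu, hv, div_pow, ← mul_div_assoc, div_le_div_iff₀ (by positivity) hh2]
    have key' : a ^ 2 ≤ 4 * (c * b) := ha2 ▸ key
    nlinarith [mul_le_mul_of_nonneg_right key' hh2.le]
  calc u = Real.sqrt (u ^ 2) := (Real.sqrt_sq hu0).symm
    _ ≤ Real.sqrt ((α * v + 1 / (2 * α) * c) ^ 2) := by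
        apply Real.sqrt_le_sqrt
        have h2 : 2 * α * (1 / (2 * α)) = 1 := by field_simp
        nlinarith [sq_nonneg (α * v - 1 / (2 * α) * c), mul_nonneg hc0 hv0]
    _ = α * v + 1 / (2 * α) * c := Real.sqrt_sq (by positivity)
end

section
/- (Sup process block-diagonalization) Let L be a Markov generator on the finite ordered lattice X = {x₁ < … < x_M} and define the joint generator of (x_t, sup_{s≤t} x_s) by L̃(x,y;x',y') = L(x,x')·[δ_{y,y'} if x' < y, and δ_{x',y'} if x' ≥ y]. Let V(x,y;x',y') = δ_{x,x'} 1(y' ≥ y), with inverse V^{-1}(x,y;x',y') = δ_{x,x'} (δ_{y',y} − δ_{y', y+h}). Then V^{-1} L̃ V is block-diagonal in y: (V^{-1} L̃ V)(x,y;x',y') = L(x,x') 1(x' ≤ y) δ_{y,y'}. In particular each block is the generator L with absorption on {x' > y}. -/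
lemma sum_S1 {M : ℕ} (y y' : Fin M) :
    ∑ b : Fin M, (if y ≤ b then (1:ℝ) else 0) * (if y' = b then 1 else 0)
      = if y ≤ y' then 1 else 0 := by
  rw [Finset.sum_eq_single y']
  · simp
  · intro b _ hb; simp [Ne.symm hb]
  · simp

lemma sum_S2 {M : ℕ} (y y' : Fin M) :
    ∑ b : Fin M, (if y ≤ b then (1:ℝ) else 0) * (if (y':ℕ) = (b:ℕ)+1 then 1 else 0)
      = if y < y' then 1 else 0 := by
  rcases Nat.eq_zero_or_pos (y':ℕ) with h | h
  · rw [Finset.sum_eq_zero, if_neg]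
    · rw [Fin.lt_def]; omega
    · intro b _
      rw [if_neg (show ¬((y':ℕ) = (b:ℕ)+1) by omega), mul_zero]
  · have hb₀ : (y':ℕ) - 1 < M := lt_of_le_of_lt (Nat.sub_le _ _) y'.isLt
    rw [Finset.sum_eq_single ⟨(y':ℕ)-1, hb₀⟩]
    · simp only [Fin.le_def, Fin.lt_def]
      rw [if_pos (show (y':ℕ) = ((⟨(y':ℕ)-1, hb₀⟩ : Fin M):ℕ)+1 by simp; omega), mul_one]
      split_ifs with h1 h2 h3 <;> first | rfl | (exfalso; revert h1; simp; omega)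
    · intro b _ hb
      have hc : ¬((y':ℕ) = (b:ℕ)+1) := fun hc => hb (Fin.ext (by simp; omega))
      rw [if_neg hc, mul_zero]
    · simp

lemma sum_S3 {M : ℕ} (y y' : Fin M) :
    ∑ b : Fin M, (if b = y then (1:ℝ) else 0) * (if b ≤ y' then 1 else 0)
      = if y ≤ y' then 1 else 0 := by
  rw [Finset.sum_eq_single y]
  · simp
  · intro b _ hb; simp [hb]
  · simp

lemma sum_S4 {M : ℕ} (y y' : Fin M) :
    ∑ b : Fin M, (if (b:ℕ) = (y:ℕ)+1 then (1:ℝ) else 0) * (if b ≤ y' then 1 else 0)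
      = if y < y' then 1 else 0 := by
  by_cases hM : (y:ℕ)+1 < M
  · rw [Finset.sum_eq_single ⟨(y:ℕ)+1, hM⟩]
    · rw [if_pos (show ((⟨(y:ℕ)+1, hM⟩ : Fin M):ℕ) = (y:ℕ)+1 by simp), one_mul]
      simp only [Fin.le_def, Fin.lt_def]
      split_ifs with h1 h2 h3 <;> first | rfl | (exfalso; revert h1; simp; omega)
    · intro b _ hb
      have hc : ¬((b:ℕ) = (y:ℕ)+1) := fun hc => hb (Fin.ext (by simp; omega))
      rw [if_neg hc, zero_mul]
    · simp
  · rw [Finset.sum_eq_zero, if_neg]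
    · have := y'.isLt; rw [Fin.lt_def]; omega
    · intro b _
      have := b.isLt
      rw [if_neg (show ¬((b:ℕ) = (y:ℕ)+1) by omega), zero_mul]

lemma sum_S5 {M : ℕ} (y : Fin M) (g : Fin M → ℝ) :
    ∑ b : Fin M, (if b = y then (1:ℝ) else 0) * g b = g y := by
  rw [Finset.sum_eq_single y]
  · simp
  · intro b _ hb; simp [hb]
  · simp

lemma sum_S6 {M : ℕ} (y : Fin M) (g : Fin M → ℝ) :
    ∑ b : Fin M, (if (b:ℕ) = (y:ℕ)+1 then (1:ℝ) else 0) * g b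
      = if h : (y:ℕ)+1 < M then g ⟨(y:ℕ)+1, h⟩ else 0 := by
  by_cases hM : (y:ℕ)+1 < M
  · rw [dif_pos hM, Finset.sum_eq_single ⟨(y:ℕ)+1, hM⟩]
    · rw [if_pos (show ((⟨(y:ℕ)+1, hM⟩ : Fin M):ℕ) = (y:ℕ)+1 by simp), one_mul]
    · intro b _ hb
      have hc : ¬((b:ℕ) = (y:ℕ)+1) := fun hc => hb (Fin.ext (by simp; omega))
      rw [if_neg hc, zero_mul]
    · simp
  · rw [dif_neg hM, Finset.sum_eq_zero]
    intro b _
    have := b.isLt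
    rw [if_neg (show ¬((b:ℕ) = (y:ℕ)+1) by omega), zero_mul]

/-- Block-diagonalization of the joint generator of a diffusion and its running
supremum by the cumulative-sum operator `V` in the `y`-variable. -/
theorem stmt_15 (M : ℕ) (L : Matrix (Fin M) (Fin M) ℝ)
    (Ltilde V Vinv : Matrix (Fin M × Fin M) (Fin M × Fin M) ℝ)
    (hLt : ∀ x y x' y', Ltilde (x, y) (x', y') =
      L x x' * (if x' < y then (if y' = y then 1 else 0) else (if y' = x' then 1 else 0)))
    (hV : ∀ x y x' y', V (x, y) (x', y') =
      (if x = x' then 1 else 0) * (if y ≤ y' then 1 else 0))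
    (hVinv : ∀ x y x' y', Vinv (x, y) (x', y') =
      (if x = x' then 1 else 0) *
        ((if y' = y then 1 else 0) - (if (y' : ℕ) = (y : ℕ) + 1 then 1 else 0))) :
    V * Vinv = 1 ∧ Vinv * V = 1 ∧
      ∀ x y x' y', (Vinv * Ltilde * V) (x, y) (x', y') =
        L x x' * (if x' ≤ y then 1 else 0) * (if y = y' then 1 else 0) := by
  refine ⟨?_, ?_, ?_⟩
  · -- V * Vinv = 1
    ext ⟨x, y⟩ ⟨x', y'⟩
    rw [Matrix.mul_apply, Fintype.sum_prod_type]
    have key : ∀ a : Fin M, ∑ b : Fin M, V (x, y) (a, b) * Vinv (a, b) (x', y')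
        = (if x = a then 1 else 0) * (if a = x' then 1 else 0) *
          ((if y ≤ y' then 1 else 0) - (if y < y' then 1 else 0)) := by
      intro a
      rw [← sum_S1 y y', ← sum_S2 y y', ← Finset.sum_sub_distrib, Finset.mul_sum]
      refine Finset.sum_congr rfl fun b _ => ?_
      rw [hV, hVinv]; ring
    simp only [key]
    rw [Matrix.one_apply, Finset.sum_eq_single x]
    · simp only [if_pos rfl, one_mul, Prod.mk.injEq]
      by_cases hx : x = x'
      · simp only [if_pos hx, one_mul, hx, true_and]
        simp only [Fin.le_def, Fin.lt_def, Fin.ext_iff]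
        split_ifs <;> first | omega | norm_num
      · simp [hx]
    · intro a _ ha; simp [Ne.symm ha]
    · simp
  · -- Vinv * V = 1
    ext ⟨x, y⟩ ⟨x', y'⟩
    rw [Matrix.mul_apply, Fintype.sum_prod_type]
    have key : ∀ a : Fin M, ∑ b : Fin M, Vinv (x, y) (a, b) * V (a, b) (x', y')
        = (if x = a then 1 else 0) * (if a = x' then 1 else 0) *
          ((if y ≤ y' then 1 else 0) - (if y < y' then 1 else 0)) := by
      intro a
      rw [← sum_S3 y y', ← sum_S4 y y', ← Finset.sum_sub_distrib, Finset.mul_sum]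
      refine Finset.sum_congr rfl fun b _ => ?_
      rw [hV, hVinv]; ring
    simp only [key]
    rw [Matrix.one_apply, Finset.sum_eq_single x]
    · simp only [if_pos rfl, one_mul, Prod.mk.injEq]
      by_cases hx : x = x'
      · simp only [if_pos hx, one_mul, hx, true_and]
        simp only [Fin.le_def, Fin.lt_def, Fin.ext_iff]
        split_ifs <;> first | omega | norm_num
      · simp [hx]
    · intro a _ ha; simp [Ne.symm ha]
    · simp
  · -- block diagonalization
    intro x y x' y'
    have hW : ∀ x y x' y', (Ltilde * V) (x, y) (x', y') =
        L x x' * (if x' < y then (if y ≤ y' then 1 else 0) else (if x' ≤ y' then 1 else 0)) := by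
      intro x y x' y'
      rw [Matrix.mul_apply, Fintype.sum_prod_type]
      have key : ∀ a : Fin M, ∑ b : Fin M, Ltilde (x, y) (a, b) * V (a, b) (x', y')
          = (if a = x' then 1 else 0) *
            (L x a * (if a < y then (if y ≤ y' then 1 else 0) else (if a ≤ y' then 1 else 0))) := by
        intro a
        by_cases ha : a < y
        · rw [if_pos ha, ← sum_S3 y y', Finset.mul_sum, Finset.mul_sum]
          refine Finset.sum_congr rfl fun b _ => ?_
          rw [hLt, hV, if_pos ha]; ring
        · rw [if_neg ha, ← sum_S3 a y', Finset.mul_sum, Finset.mul_sum]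
          refine Finset.sum_congr rfl fun b _ => ?_
          rw [hLt, hV, if_neg ha]; ring
      simp only [key]
      rw [Finset.sum_eq_single x']
      · simp
      · intro a _ ha; simp [ha]
      · simp
    rw [Matrix.mul_assoc, Matrix.mul_apply, Fintype.sum_prod_type]
    have key : ∀ a : Fin M, ∑ b : Fin M, Vinv (x, y) (a, b) * (Ltilde * V) (a, b) (x', y')
        = (if x = a then 1 else 0) *
          (L a x' * ((if x' < y then (if y ≤ y' then 1 else 0) else (if x' ≤ y' then 1 else 0))
            - (if h : (y:ℕ)+1 < M then
                (if x' < (⟨(y:ℕ)+1, h⟩ : Fin M) then (if (⟨(y:ℕ)+1, h⟩ : Fin M) ≤ y' then 1 else 0)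
                 else (if x' ≤ y' then 1 else 0)) else 0))) := by
      intro a
      have e1 : ∑ b : Fin M, (if b = y then (1:ℝ) else 0) *
          (L a x' * (if x' < b then (if b ≤ y' then 1 else 0) else (if x' ≤ y' then 1 else 0)))
          = L a x' * (if x' < y then (if y ≤ y' then 1 else 0) else (if x' ≤ y' then 1 else 0)) :=
        sum_S5 y _
      have e2 : ∑ b : Fin M, (if (b:ℕ) = (y:ℕ)+1 then (1:ℝ) else 0) *
          (L a x' * (if x' < b then (if b ≤ y' then 1 else 0) else (if x' ≤ y' then 1 else 0)))
          = if h : (y:ℕ)+1 < M then L a x' *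
              (if x' < (⟨(y:ℕ)+1, h⟩ : Fin M) then (if (⟨(y:ℕ)+1, h⟩ : Fin M) ≤ y' then 1 else 0)
               else (if x' ≤ y' then 1 else 0)) else 0 :=
        sum_S6 y _
      have e3 : L a x' * (if h : (y:ℕ)+1 < M then
            (if x' < (⟨(y:ℕ)+1, h⟩ : Fin M) then (if (⟨(y:ℕ)+1, h⟩ : Fin M) ≤ y' then (1:ℝ) else 0)
             else (if x' ≤ y' then 1 else 0)) else 0)
          = ∑ b : Fin M, (if (b:ℕ) = (y:ℕ)+1 then (1:ℝ) else 0) *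
            (L a x' * (if x' < b then (if b ≤ y' then 1 else 0) else (if x' ≤ y' then 1 else 0))) := by
        rw [e2]
        by_cases h : (y:ℕ)+1 < M
        · rw [dif_pos h, dif_pos h]
        · rw [dif_neg h, dif_neg h, mul_zero]
      rw [mul_sub, ← e1, e3, ← Finset.sum_sub_distrib, Finset.mul_sum]
      refine Finset.sum_congr rfl fun b _ => ?_
      rw [hVinv, hW]; ring
    simp only [key]
    rw [Finset.sum_eq_single x]
    · rw [if_pos rfl, one_mul]
      have hfac : ((if x' < y then (if y ≤ y' then (1:ℝ) else 0) else (if x' ≤ y' then 1 else 0))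
            - (if h : (y:ℕ)+1 < M then
                (if x' < (⟨(y:ℕ)+1, h⟩ : Fin M) then (if (⟨(y:ℕ)+1, h⟩ : Fin M) ≤ y' then 1 else 0)
                 else (if x' ≤ y' then 1 else 0)) else 0))
          = (if x' ≤ y then 1 else 0) * (if y = y' then 1 else 0) := by
        have hy' := y'.isLt
        by_cases hM : (y:ℕ)+1 < M
        · rw [dif_pos hM]
          simp only [Fin.lt_def, Fin.le_def, Fin.ext_iff]
          split_ifs <;> first | omega | norm_num
        · rw [dif_neg hM, sub_zero]
          simp only [Fin.lt_def, Fin.le_def, Fin.ext_iff]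
          split_ifs <;> first | omega | norm_num
      rw [hfac]; ring
    · intro a _ ha; simp [Ne.symm ha]
    · simp
end

section
/- (Sup process kernel formula) With the notation of the sup-process block diagonalization, let û(x,x';y,t) = e^{t L_y}(x,x') where L_y(x,x') = L(x,x') 1(x' ≤ y) is the generator with absorption above level y. Then the joint kernel of the pair (x_t, sup_{s≤t} x_s) started from (x, y) satisfies u(x,y;x',y';t) = δ(y−y') û(x,x';y,t) + 1(y' > y) (û(x,x';y',t) − û(x,x';y'−h,t)). -/
private lemma sum_kernel_eval (M : ℕ) (uhat : Fin M → Matrix (Fin M) (Fin M) ℝ)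
    (x y x' y' : Fin M) :
    (∑ b : Fin M, (if y ≤ b then (1:ℝ) else 0) * uhat b x x' *
          ((if y' = b then 1 else 0) - (if (y':ℕ) = (b:ℕ)+1 then 1 else 0))) =
      (if y = y' then 1 else 0) * uhat y x x' +
        (if y < y' then 1 else 0) *
          (uhat y' x x' -
            uhat ⟨(y' : ℕ) - 1, Nat.lt_of_le_of_lt (Nat.sub_le _ _) y'.isLt⟩ x x') := by
  set b0 : Fin M := ⟨(y' : ℕ) - 1, Nat.lt_of_le_of_lt (Nat.sub_le _ _) y'.isLt⟩ with hb0
  have hb0v : (b0 : ℕ) = (y' : ℕ) - 1 := rfl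
  simp only [mul_sub, Finset.sum_sub_distrib]
  have hS1 : (∑ b : Fin M, (if y ≤ b then (1:ℝ) else 0) * uhat b x x' *
      (if y' = b then 1 else 0)) = if y ≤ y' then uhat y' x x' else 0 := by
    rw [Finset.sum_eq_single y']
    · rw [if_pos rfl, mul_one]; split_ifs <;> ring
    · intro b _ hb
      rw [if_neg (show ¬ y' = b from fun hc => hb hc.symm), mul_zero]
    · simp
  have hS2 : (∑ b : Fin M, (if y ≤ b then (1:ℝ) else 0) * uhat b x x' *
      (if (y':ℕ) = (b:ℕ)+1 then 1 else 0)) =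
      if y ≤ b0 ∧ (y':ℕ) = (b0:ℕ)+1 then uhat b0 x x' else 0 := by
    rw [Finset.sum_eq_single b0]
    · by_cases h2 : (y':ℕ) = (b0:ℕ)+1
      · by_cases h1 : y ≤ b0
        · rw [if_pos h1, if_pos h2, if_pos ⟨h1, h2⟩]; ring
        · rw [if_neg h1, if_neg (show ¬(y ≤ b0 ∧ (y':ℕ) = (b0:ℕ)+1) from
            fun hc => h1 hc.1)]; ring
      · rw [if_neg h2, if_neg (show ¬(y ≤ b0 ∧ (y':ℕ) = (b0:ℕ)+1) from
          fun hc => h2 hc.2), mul_zero]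
    · intro b _ hb
      have : (y':ℕ) ≠ (b:ℕ)+1 := fun h => hb (Fin.ext (by omega))
      rw [if_neg this, mul_zero]
    · simp
  rw [hS1, hS2]
  rcases lt_trichotomy y y' with h | h | h
  · have hv : (y:ℕ) < (y':ℕ) := h
    rw [if_pos h.le, if_neg (show ¬ y = y' from h.ne), if_pos h,
      if_pos (show y ≤ b0 ∧ (y':ℕ) = (b0:ℕ)+1 from ⟨Fin.le_def.mpr (by omega), by omega⟩)]
    ring
  · subst h
    rw [if_pos le_rfl, if_pos rfl, if_neg (lt_irrefl y),
      if_neg (show ¬(y ≤ b0 ∧ (y:ℕ) = (b0:ℕ)+1) from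
        fun hc => by have := Fin.le_def.mp hc.1; omega)]
    ring
  · have hv : (y':ℕ) < (y:ℕ) := h
    rw [if_neg (not_le.mpr h), if_neg (show ¬ y = y' from h.ne'),
      if_neg (not_lt.mpr h.le),
      if_neg (show ¬(y ≤ b0 ∧ (y':ℕ) = (b0:ℕ)+1) from
        fun hc => by have := Fin.le_def.mp hc.1; omega)]
    ring

/-- The joint kernel of `(x_t, sup_{s ≤ t} x_s)`: conjugating the block-diagonal
semigroup (built from the generators with absorption above level `y`) by the
cumulative operator `V` yields the explicit formula for the joint kernel. -/
theorem stmt_16 (M : ℕ) (L : Matrix (Fin M) (Fin M) ℝ) (t : ℝ) (ht : 0 ≤ t)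
    (Ly : Fin M → Matrix (Fin M) (Fin M) ℝ)
    (hLy : ∀ y x x', Ly y x x' = L x x' * (if x' ≤ y then 1 else 0))
    (uhat : Fin M → Matrix (Fin M) (Fin M) ℝ)
    (huhat : ∀ y, uhat y = NormedSpace.exp (t • Ly y))
    (V Vinv utilde : Matrix (Fin M × Fin M) (Fin M × Fin M) ℝ)
    (hV : ∀ x y x' y', V (x, y) (x', y') =
      (if x = x' then 1 else 0) * (if y ≤ y' then 1 else 0))
    (hVinv : ∀ x y x' y', Vinv (x, y) (x', y') =
      (if x = x' then 1 else 0) *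
        ((if y' = y then 1 else 0) - (if (y' : ℕ) = (y : ℕ) + 1 then 1 else 0)))
    (hut : ∀ x y x' y', utilde (x, y) (x', y') =
      (if y = y' then 1 else 0) * uhat y x x') :
    ∀ x y x' y', (V * utilde * Vinv) (x, y) (x', y') =
      (if y = y' then 1 else 0) * uhat y x x' +
        (if y < y' then 1 else 0) *
          (uhat y' x x' -
            uhat ⟨(y' : ℕ) - 1, Nat.lt_of_le_of_lt (Nat.sub_le _ _) y'.isLt⟩ x x') := by
  intro x y x' y'
  have expand : (V * utilde * Vinv) (x, y) (x', y')
      = ∑ b : Fin M, (if y ≤ b then (1:ℝ) else 0) * uhat b x x' *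
          ((if y' = b then 1 else 0) - (if (y':ℕ) = (b:ℕ)+1 then 1 else 0)) := by
    simp only [Matrix.mul_apply, Fintype.sum_prod_type]
    simp only [hV, hVinv, hut]
    simp [Finset.mul_sum, Finset.sum_mul, ite_mul, mul_ite,
      Finset.sum_ite_eq, Finset.sum_ite_eq']
  rw [expand, sum_kernel_eval]
end
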